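/- The set T = Top([N], v, θ_v) is an optimal assortment: |T| ≤ K and R(T, v) = θ_v, where θ_v is the maximum of R(S, v) over all S ⊆ [N] with |S| ≤ K. -/

import Mathlib

/-- The expected reward `R(S, v)` of an assortment `S`. -/
noncomputable def Rew {N : ℕ} (r v : Fin N → ℝ) (S : Finset (Fin N)) : ℝ :=
  (∑ i ∈ S, r i * v i) / (1 + ∑ i ∈ S, v i)

/-- `θ_v`: the optimal expected reward over assortments of size at most `K`. -/
noncomputable def thetaOpt (N K : ℕ) (r v : Fin N → ℝ) : ℝ :=
  ((Finset.univ : Finset (Fin N)).powerset.filter (fun S => S.card ≤ K)).sup'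
    ⟨∅, by simp⟩ (Rew r v)

/- `Top([N], w, θ)`: take the `min {K, N}` items `i` with the largest values
`(r i − θ) * w i` (ties broken in favor of smaller index), then remove all items
with `r i − θ ≤ 0`. -/
open Classical in
noncomputable def TopSet (N K : ℕ) (r w : Fin N → ℝ) (θ : ℝ) : Finset (Fin N) :=
  ((List.insertionSort (fun i j =>
      (r j - θ) * w j < (r i - θ) * w i ∨
      ((r i - θ) * w i = (r j - θ) * w j ∧ i ≤ j)) (List.finRange N)).take
    (min K N)).toFinset.filter (fun i => θ < r i)
lemma aux_sum_top {ι : Type*} [DecidableEq ι] (A B : Finset ι) (h : ι → ℝ)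
    (hpos : ∀ b, 0 ≤ h b) (hcard : A.card ≤ B.card)
    (hcross : ∀ a ∈ A \ B, ∀ b ∈ B \ A, h a ≤ h b) :
    ∑ i ∈ A, h i ≤ ∑ i ∈ B, h i := by
  have hA := Finset.sum_inter_add_sum_sdiff A B h
  have hB := Finset.sum_inter_add_sum_sdiff B A h
  rw [Finset.inter_comm] at hB
  have hcard' : (A \ B).card ≤ (B \ A).card := by
    have h1 := Finset.card_sdiff_add_card_inter A B
    have h2 := Finset.card_sdiff_add_card_inter B A
    rw [Finset.inter_comm] at h2
    omega
  rw [← hA, ← hB]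
  refine add_le_add (le_refl _) ?_
  rcases Finset.eq_empty_or_nonempty (B \ A) with he | hne
  · have : A \ B = ∅ := Finset.card_eq_zero.mp (by rw [he] at hcard'; simpa using hcard')
    simp [this, he]
  · set m := (B \ A).inf' hne h with hm
    have hm0 : 0 ≤ m := Finset.le_inf' hne h fun b _ => hpos b
    calc ∑ i ∈ A \ B, h i ≤ (A \ B).card • m := by
          apply Finset.sum_le_card_nsmul
          intro x hx
          exact Finset.le_inf' hne h fun b hb => hcross x hx b hb
      _ ≤ (B \ A).card • m := by
          rw [nsmul_eq_mul, nsmul_eq_mul]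
          exact mul_le_mul_of_nonneg_right (by exact_mod_cast hcard') hm0
      _ ≤ ∑ i ∈ B \ A, h i := Finset.card_nsmul_le_sum _ _ _ fun x hx => Finset.inf'_le h hx

/-- `T = Top([N], v, θ_v)` is an optimal assortment: `|T| ≤ K` and `R(T, v) = θ_v`. -/
theorem stmt3 (N K : ℕ) (hK : 1 ≤ K) (hKN : K ≤ N) (r v : Fin N → ℝ)
    (hr : ∀ i, 0 < r i ∧ r i ≤ 1) (hv : ∀ i, 0 ≤ v i ∧ v i ≤ 1) :
    (TopSet N K r v (thetaOpt N K r v)).card ≤ K ∧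
      Rew r v (TopSet N K r v (thetaOpt N K r v)) = thetaOpt N K r v := by
  classical
  set θ := thetaOpt N K r v with hθdef
  set g : Fin N → ℝ := fun i => (r i - θ) * v i with hg
  set rel : Fin N → Fin N → Prop := fun i j =>
      g j < g i ∨ (g i = g j ∧ i ≤ j) with hrel
  haveI hTot : IsTotal (Fin N) rel := ⟨by
    intro a b
    rcases lt_trichotomy (g a) (g b) with h | h | h
    · exact Or.inr (Or.inl h)
    · rcases le_total a b with hab | hab
      · exact Or.inl (Or.inr ⟨h, hab⟩)
      · exact Or.inr (Or.inr ⟨h.symm, hab⟩)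
    · exact Or.inl (Or.inl h)⟩
  haveI hTrans : IsTrans (Fin N) rel := ⟨by
    intro a b c hab hbc
    rcases hab with h1 | ⟨h1, h1'⟩ <;> rcases hbc with h2 | ⟨h2, h2'⟩
    · exact Or.inl (h2.trans h1)
    · exact Or.inl (h2 ▸ h1)
    · exact Or.inl (h1 ▸ h2)
    · exact Or.inr ⟨h1.trans h2, h1'.trans h2'⟩⟩
  set L := List.insertionSort rel (List.finRange N) with hL
  have hperm : L.Perm (List.finRange N) := List.perm_insertionSort _ _
  have hsort : L.Pairwise rel := List.pairwise_insertionSort _ _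
  have hnodup : L.Nodup := hperm.nodup_iff.mpr (List.nodup_finRange N)
  have hlen : L.length = N := by rw [hperm.length_eq, List.length_finRange]
  set Tk := (L.take (min K N)).toFinset with hTk
  have hTop : TopSet N K r v θ = Tk.filter (fun i => θ < r i) := rfl
  have hTkcard : Tk.card = min K N := by
    rw [hTk, List.toFinset_card_of_nodup (hnodup.sublist (List.take_sublist _ _))]
    rw [List.length_take, hlen]
    exact min_eq_left (min_le_right _ _)
  -- basic positivity facts
  have hsv : ∀ S : Finset (Fin N), 0 ≤ ∑ i ∈ S, v i :=
    fun S => Finset.sum_nonneg fun i _ => (hv i).1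
  have hposd : ∀ S : Finset (Fin N), 0 < 1 + ∑ i ∈ S, v i :=
    fun S => add_pos_of_pos_of_nonneg one_pos (hsv S)
  have hgsum : ∀ S : Finset (Fin N),
      ∑ i ∈ S, g i = (∑ i ∈ S, r i * v i) - θ * ∑ i ∈ S, v i := by
    intro S
    rw [Finset.mul_sum, ← Finset.sum_sub_distrib]
    exact Finset.sum_congr rfl fun i _ => by simp [hg]; ring
  have hmemF : ∀ S : Finset (Fin N), S.card ≤ K →
      S ∈ (Finset.univ : Finset (Fin N)).powerset.filter (fun S => S.card ≤ K) := by
    intro S hS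
    simp [Finset.mem_filter, hS]
  have hRle : ∀ S : Finset (Fin N), S.card ≤ K → Rew r v S ≤ θ := by
    intro S hS
    exact Finset.le_sup' (Rew r v) (hmemF S hS)
  have hfle : ∀ S : Finset (Fin N), S.card ≤ K → ∑ i ∈ S, g i ≤ θ := by
    intro S hS
    have h1 := hRle S hS
    rw [Rew, div_le_iff₀ (hposd S)] at h1
    rw [hgsum]
    nlinarith [hsv S]
  have hθ0 : 0 ≤ θ := by
    have h0 : Rew r v (∅ : Finset (Fin N)) ≤ θ := hRle ∅ (by simp)
    have : Rew r v (∅ : Finset (Fin N)) = 0 := by simp [Rew]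
    have h1 := Finset.le_sup' (Rew r v) (hmemF ∅ (by simp))
    rw [this] at h1
    exact h1
  -- maximizer
  obtain ⟨S0, hS0F, hS0⟩ := Finset.exists_mem_eq_sup'
    (⟨∅, by simp⟩ : ((Finset.univ : Finset (Fin N)).powerset.filter
      (fun S => S.card ≤ K)).Nonempty) (Rew r v)
  have hS0card : S0.card ≤ K := (Finset.mem_filter.mp hS0F).2
  have hfS0 : ∑ i ∈ S0, g i = θ := by
    have h1 : Rew r v S0 = θ := hS0.symm
    rw [Rew, div_eq_iff (ne_of_gt (hposd S0))] at h1
    rw [hgsum]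
    nlinarith [hsv S0]
  -- gp
  set gp : Fin N → ℝ := fun i => max (g i) 0 with hgp
  have hgp0 : ∀ i, 0 ≤ gp i := fun i => le_max_right _ _
  have hTkgp : ∑ i ∈ Tk, gp i = ∑ i ∈ Tk.filter (fun i => θ < r i), g i := by
    rw [← Finset.sum_filter_add_sum_filter_not Tk (fun i => θ < r i) gp]
    have h1 : ∑ i ∈ Tk.filter (fun i => θ < r i), gp i
        = ∑ i ∈ Tk.filter (fun i => θ < r i), g i := by
      refine Finset.sum_congr rfl fun i hi => ?_
      have := (Finset.mem_filter.mp hi).2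
      exact max_eq_left (mul_nonneg (by linarith) (hv i).1)
    have h2 : ∑ i ∈ Tk.filter (fun i => ¬ θ < r i), gp i = 0 := by
      refine Finset.sum_eq_zero fun i hi => ?_
      have := (Finset.mem_filter.mp hi).2
      push_neg at this
      exact max_eq_right (mul_nonpos_of_nonpos_of_nonneg (by linarith) (hv i).1)
    rw [h1, h2, add_zero]
  -- cross condition
  have hcross : ∀ a ∈ S0 \ Tk, ∀ b ∈ Tk \ S0, g a ≤ g b := by
    intro a ha b hb
    have haT : a ∉ Tk := (Finset.mem_sdiff.mp ha).2
    have hbT : b ∈ Tk := (Finset.mem_sdiff.mp hb).1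
    have hbtake : b ∈ L.take (min K N) := List.mem_toFinset.mp hbT
    have hatake : a ∉ L.take (min K N) := fun h => haT (List.mem_toFinset.mpr h)
    have haL : a ∈ L := hperm.mem_iff.mpr (List.mem_finRange a)
    have hadrop : a ∈ L.drop (min K N) := by
      rcases List.mem_append.mp ((List.take_append_drop (min K N) L).symm ▸ haL)
        with h | h
      · exact absurd h hatake
      · exact h
    have hpw : List.Pairwise rel (L.take (min K N) ++ L.drop (min K N)) := by
      rw [List.take_append_drop]
      exact hsort
    have hrab : rel b a := (List.pairwise_append.mp hpw).2.2 b hbtake a hadrop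
    rcases hrab with h | ⟨h, _⟩
    · exact le_of_lt h
    · exact le_of_eq h.symm
  have hcardS0 : S0.card ≤ Tk.card := by
    rw [hTkcard]
    refine le_min hS0card ?_
    calc S0.card ≤ Finset.univ.card := Finset.card_le_univ S0
      _ = N := by simp
  -- card bound for T
  set T := Tk.filter (fun i => θ < r i) with hTdef
  have hTcard : T.card ≤ K := by
    calc T.card ≤ Tk.card := Finset.card_filter_le _ _
      _ = min K N := hTkcard
      _ ≤ K := min_le_left _ _
  -- main chain
  have hchain : θ ≤ ∑ i ∈ T, g i := by
    calc θ = ∑ i ∈ S0, g i := hfS0.symm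
      _ ≤ ∑ i ∈ S0, gp i := Finset.sum_le_sum fun i _ => le_max_left _ _
      _ ≤ ∑ i ∈ Tk, gp i := by
          refine aux_sum_top S0 Tk gp hgp0 hcardS0 fun a ha b hb => ?_
          exact max_le_max (hcross a ha b hb) le_rfl
      _ = ∑ i ∈ T, g i := hTkgp
  have hfT : ∑ i ∈ T, g i = θ := le_antisymm (hfle T hTcard) hchain
  constructor
  · rw [hTop]; exact hTcard
  · rw [hTop, Rew]
    rw [hgsum] at hfT
    rw [div_eq_iff (ne_of_gt (hposd T))]
    show ∑ i ∈ T, r i * v i = θ * (1 + ∑ i ∈ T, v i)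
    nlinarith [hsv T]
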